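/- Every Borel measurable function f : ω^ω → ω^ω has a superperfect free subset; that is, there is a superperfect tree T ⊆ ω^{<ω} such that for every x ∈ [T], either f(x) = x or f(x) ∉ [T]. -/

import Mathlib

/-- `T ⊆ ω^{<ω}` is a tree: closed under initial segments. -/
def IsTreeN (T : Set (List ℕ)) : Prop :=
  ∀ σ ∈ T, ∀ τ : List ℕ, τ <+: σ → τ ∈ T

/-- `T` is superperfect: a nonempty tree in which every node has an ω-splitting
extension. -/
def Superperfect (T : Set (List ℕ)) : Prop :=
  T.Nonempty ∧ IsTreeN T ∧
    ∀ σ ∈ T, ∃ τ ∈ T, σ <+: τ ∧ {n : ℕ | τ ++ [n] ∈ T}.Infinite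

/-- The set of branches `[T]` of a tree `T ⊆ ω^{<ω}`. -/
def branches (T : Set (List ℕ)) : Set (ℕ → ℕ) :=
  {x : ℕ → ℕ | ∀ n : ℕ, (List.range n).map x ∈ T}


namespace SPF

open Classical

def pre (x : ℕ → ℕ) (n : ℕ) : List ℕ := (List.range n).map x
@[simp] lemma pre_length (x : ℕ → ℕ) (n : ℕ) : (pre x n).length = n := by simp [pre]
lemma pre_take (x : ℕ → ℕ) (n m : ℕ) : (pre x m).take n = pre x (min n m) := by
  simp [pre, ← List.map_take, List.take_range]
lemma pre_prefix (x : ℕ → ℕ) {n m : ℕ} (h : n ≤ m) : pre x n <+: pre x m := by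
  have := List.take_prefix n (pre x m)
  rwa [pre_take, min_eq_left h] at this
lemma pre_getD (x : ℕ → ℕ) {i n : ℕ} (h : i < n) : (pre x n).getD i 0 = x i := by
  rw [List.getD_eq_getElem _ _ (by simpa using h)]
  simp [pre]
lemma prefix_getD {l₁ l₂ : List ℕ} (h : l₁ <+: l₂) {i : ℕ} (hi : i < l₁.length) :
    l₂.getD i 0 = l₁.getD i 0 := by
  obtain ⟨t, rfl⟩ := h
  rw [List.getD_eq_getElem _ _ (by simp; omega), List.getD_eq_getElem _ _ (by omega),
    List.getElem_append_left hi]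
lemma mem_branches_iff {T : Set (List ℕ)} {x : ℕ → ℕ} :
    x ∈ branches T ↔ ∀ n, pre x n ∈ T := Iff.rfl

lemma cons_of_proper_suffix {l l' : List ℕ} (h : l <:+ l') (hne : l ≠ l') :
    ∃ c, c :: l <:+ l' := by
  obtain ⟨u, rfl⟩ := h
  have hu : u ≠ [] := by rintro rfl; simp at hne
  refine ⟨u.getLast hu, u.dropLast, ?_⟩
  conv_rhs => rw [← List.dropLast_append_getLast hu]
  simp

noncomputable def splitExt (S : Set (List ℕ)) (hS : Superperfect S) (σ : List ℕ) : List ℕ :=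
  if h : σ ∈ S then (hS.2.2 σ h).choose else []

lemma splitExt_spec {S : Set (List ℕ)} (hS : Superperfect S) {σ : List ℕ} (h : σ ∈ S) :
    splitExt S hS σ ∈ S ∧ σ <+: splitExt S hS σ ∧
      {n : ℕ | splitExt S hS σ ++ [n] ∈ S}.Infinite := by
  rw [splitExt, dif_pos h]
  obtain ⟨h1, h2, h3⟩ := (hS.2.2 σ h).choose_spec
  exact ⟨h1, h2, h3⟩

noncomputable def achF (S : Set (List ℕ)) (P : ℕ → List ℕ → Prop)
    (Hach : ∀ (n : ℕ) (σ : List ℕ), σ ∈ S → ∃ τ ∈ S, σ <+: τ ∧ P n τ)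
    (n : ℕ) (σ : List ℕ) : List ℕ :=
  if h : σ ∈ S then (Hach n σ h).choose else σ

lemma achF_spec {S : Set (List ℕ)} {P : ℕ → List ℕ → Prop}
    {Hach : ∀ (n : ℕ) (σ : List ℕ), σ ∈ S → ∃ τ ∈ S, σ <+: τ ∧ P n τ}
    {n : ℕ} {σ : List ℕ} (h : σ ∈ S) :
    achF S P Hach n σ ∈ S ∧ σ <+: achF S P Hach n σ ∧ P n (achF S P Hach n σ) := by
  rw [achF, dif_pos h]
  obtain ⟨h1, h2, h3⟩ := (Hach n σ h).choose_spec
  exact ⟨h1, h2, h3⟩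

noncomputable def achUpTo (S : Set (List ℕ)) (P : ℕ → List ℕ → Prop)
    (Hach : ∀ (n : ℕ) (σ : List ℕ), σ ∈ S → ∃ τ ∈ S, σ <+: τ ∧ P n τ) :
    ℕ → List ℕ → List ℕ
  | 0, σ => achF S P Hach 0 σ
  | (k+1), σ => achF S P Hach (k+1) (achUpTo S P Hach k σ)

lemma achUpTo_spec {S : Set (List ℕ)} {P : ℕ → List ℕ → Prop}
    {Hach : ∀ (n : ℕ) (σ : List ℕ), σ ∈ S → ∃ τ ∈ S, σ <+: τ ∧ P n τ}
    (Hher : ∀ (n : ℕ) (σ τ : List ℕ), P n σ → σ <+: τ → P n τ)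
    (K : ℕ) {σ : List ℕ} (h : σ ∈ S) :
    achUpTo S P Hach K σ ∈ S ∧ σ <+: achUpTo S P Hach K σ ∧
      ∀ k ≤ K, P k (achUpTo S P Hach K σ) := by
  induction K with
  | zero =>
    obtain ⟨h1, h2, h3⟩ := achF_spec (Hach := Hach) (n := 0) h
    exact ⟨h1, h2, fun k hk => by rw [Nat.le_zero.mp hk]; exact h3⟩
  | succ K ih =>
    obtain ⟨h1, h2, h3⟩ := ih
    obtain ⟨g1, g2, g3⟩ := achF_spec (Hach := Hach) (n := K+1) h1
    refine ⟨g1, h2.trans g2, fun k hk => ?_⟩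
    rcases Nat.lt_or_ge k (K+1) with hk' | hk'
    · exact Hher k _ _ (h3 k (by omega)) g2
    · have hke : k = K + 1 := by omega
      rw [hke]; exact g3


noncomputable def extF (S : Set (List ℕ)) (P : ℕ → List ℕ → Prop) (hS : Superperfect S)
    (Hach : ∀ (n : ℕ) (σ : List ℕ), σ ∈ S → ∃ τ ∈ S, σ <+: τ ∧ P n τ)
    (K : ℕ) (σ : List ℕ) : List ℕ :=
  splitExt S hS (achUpTo S P Hach K σ)

lemma extF_spec {S : Set (List ℕ)} {P : ℕ → List ℕ → Prop} {hS : Superperfect S}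
    {Hach : ∀ (n : ℕ) (σ : List ℕ), σ ∈ S → ∃ τ ∈ S, σ <+: τ ∧ P n τ}
    (Hher : ∀ (n : ℕ) (σ τ : List ℕ), P n σ → σ <+: τ → P n τ)
    (K : ℕ) {σ : List ℕ} (h : σ ∈ S) :
    extF S P hS Hach K σ ∈ S ∧ σ <+: extF S P hS Hach K σ ∧
      {n : ℕ | extF S P hS Hach K σ ++ [n] ∈ S}.Infinite ∧
      ∀ k ≤ K, P k (extF S P hS Hach K σ) := by
  obtain ⟨h1, h2, h3⟩ := achUpTo_spec Hher K h
  obtain ⟨g1, g2, g3⟩ := splitExt_spec hS h1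
  exact ⟨g1, h2.trans g2, g3, fun k hk => Hher k _ _ (h3 k hk) g2⟩

noncomputable def succv (S : Set (List ℕ)) (σ : List ℕ) (m : ℕ) : ℕ :=
  if h : {n : ℕ | σ ++ [n] ∈ S}.Infinite then (Set.Infinite.natEmbedding _ h m : ℕ) else 0

lemma succv_mem {S : Set (List ℕ)} {σ : List ℕ} (h : {n : ℕ | σ ++ [n] ∈ S}.Infinite) (m : ℕ) :
    σ ++ [succv S σ m] ∈ S := by
  rw [succv, dif_pos h]
  exact (Set.Infinite.natEmbedding _ h m).2

lemma succv_inj {S : Set (List ℕ)} {σ : List ℕ} (h : {n : ℕ | σ ++ [n] ∈ S}.Infinite) :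
    Function.Injective (succv S σ) := by
  intro a b hab
  simp only [succv, dif_pos h] at hab
  exact (Set.Infinite.natEmbedding _ h).injective (Subtype.ext hab)

noncomputable def eF (S : Set (List ℕ)) (P : ℕ → List ℕ → Prop) (hS : Superperfect S)
    (Hach : ∀ (n : ℕ) (σ : List ℕ), σ ∈ S → ∃ τ ∈ S, σ <+: τ ∧ P n τ) : List ℕ → List ℕ
  | [] => extF S P hS Hach 0 []
  | (m :: t) =>
      extF S P hS Hach (t.length + 1)
        (eF S P hS Hach t ++ [succv S (eF S P hS Hach t) m])

section eFlemmas

variable {S : Set (List ℕ)} {P : ℕ → List ℕ → Prop} {hS : Superperfect S}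
    {Hach : ∀ (n : ℕ) (σ : List ℕ), σ ∈ S → ∃ τ ∈ S, σ <+: τ ∧ P n τ}
    (Hher : ∀ (n : ℕ) (σ τ : List ℕ), P n σ → σ <+: τ → P n τ)

lemma nil_mem (hS' : Superperfect S) : [] ∈ S := by
  obtain ⟨σ, h⟩ := hS'.1
  exact hS'.2.1 σ h [] List.nil_prefix

include Hher

local notation "e" => eF S P hS Hach

lemma eF_spec : ∀ t : List ℕ, e t ∈ S ∧ {n : ℕ | e t ++ [n] ∈ S}.Infinite ∧
    ∀ k ≤ t.length, P k (e t)
  | [] => by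
    obtain ⟨h1, _h2, h3, h4⟩ := extF_spec (hS := hS) Hher 0 (nil_mem hS)
    exact ⟨h1, h3, by simpa [eF] using h4⟩
  | (m :: t) => by
    obtain ⟨h1, h2, h3⟩ := eF_spec t
    have hmem : e t ++ [succv S (e t) m] ∈ S := succv_mem h2 m
    obtain ⟨g1, _g2, g3, g4⟩ := extF_spec (hS := hS) Hher (t.length + 1) hmem
    exact ⟨g1, g3, by simpa [eF] using g4⟩

lemma eF_cons_prefix (m : ℕ) (t : List ℕ) :
    e t ++ [succv S (e t) m] <+: e (m :: t) := by
  have hmem : e t ++ [succv S (e t) m] ∈ S := succv_mem (eF_spec (hS := hS) (Hach := Hach) Hher t).2.1 m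
  exact (extF_spec (hS := hS) Hher (t.length + 1) hmem).2.1

lemma eF_len_lt (m : ℕ) (t : List ℕ) : (e t).length < (e (m :: t)).length := by
  have := (eF_cons_prefix (hS := hS) (Hach := Hach) Hher m t).length_le
  simp at this
  omega

lemma eF_coord (m : ℕ) (t : List ℕ) :
    (e (m :: t)).getD (e t).length 0 = succv S (e t) m := by
  have h1 : (e (m :: t)).getD (e t).length 0 = (e t ++ [succv S (e t) m]).getD (e t).length 0 :=
    prefix_getD (eF_cons_prefix (hS := hS) (Hach := Hach) Hher m t) (by simp)
  rw [h1, List.getD_append_right _ _ _ _ (le_refl _)]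
  simp

lemma eF_suffix_mono {s t : List ℕ} (h : s <:+ t) : e s <+: e t := by
  induction t with
  | nil =>
    rw [List.suffix_nil.mp h]
  | cons m t ih =>
    rcases List.suffix_cons_iff.mp h with rfl | h'
    · exact List.prefix_refl _
    · exact (ih h').trans ((List.prefix_append _ _).trans (eF_cons_prefix (hS := hS) (Hach := Hach) Hher m t))

lemma eF_len_strict_mono {s t : List ℕ} (h : s <:+ t) (hne : s ≠ t) :
    (e s).length < (e t).length := by
  induction t with
  | nil => exact absurd (List.suffix_nil.mp h) hne
  | cons m t ih =>
    rcases List.suffix_cons_iff.mp h with rfl | h'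
    · exact absurd rfl hne
    · rcases eq_or_ne s t with rfl | hne'
      · exact eF_len_lt (hS := hS) (Hach := Hach) Hher m s
      · exact (ih h' hne').trans (eF_len_lt (hS := hS) (Hach := Hach) Hher m t)

lemma eF_comp (N : ℕ) : ∀ s t : List ℕ, s.length + t.length ≤ N → e s <+: e t → s <:+ t := by
  induction N with
  | zero =>
    intro s t hlen _h
    have hs : s = [] := by cases s <;> simp_all
    rw [hs]
    exact List.nil_suffix
  | succ N ih =>
    intro s t hlen h
    match s, t with
    | [], t => exact List.nil_suffix
    | (a :: s'), [] =>
      exfalso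
      have h1 : (e []).length ≤ (e s').length := (eF_suffix_mono (hS := hS) (Hach := Hach) Hher List.nil_suffix).length_le
      have h2 : (e s').length < (e (a :: s')).length := eF_len_lt (hS := hS) (Hach := Hach) Hher a s'
      have h3 : (e (a :: s')).length ≤ (e []).length := h.length_le
      omega
    | (a :: s'), (m :: t') =>
      have het' : e t' <+: e (m :: t') :=
        (List.prefix_append _ _).trans (eF_cons_prefix (hS := hS) (Hach := Hach) Hher m t')
      rcases le_or_gt (e (a :: s')).length (e t').length with hle | hlt
      · have h1 : e (a :: s') <+: e t' := List.prefix_of_prefix_length_le h het' hle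
        have h2 := ih (a :: s') t' (by simp at hlen ⊢; omega) h1
        exact List.suffix_cons_iff.mpr (Or.inr h2)
      · have hpre : e t' <+: e (a :: s') := List.prefix_of_prefix_length_le het' h hlt.le
        have hs : t' <:+ (a :: s') := ih t' (a :: s') (by simp at hlen ⊢; omega) hpre
        have hne : t' ≠ a :: s' := by
          intro hq
          rw [hq] at hlt
          omega
        obtain ⟨c, hc⟩ := cons_of_proper_suffix hs hne
        have h1 : e (c :: t') <+: e (a :: s') := eF_suffix_mono (hS := hS) (Hach := Hach) Hher hc
        have hlen1 : (e t').length < (e (c :: t')).length := eF_len_lt (hS := hS) (Hach := Hach) Hher c t'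
        have e1 : (e (a :: s')).getD (e t').length 0 = succv S (e t') c := by
          rw [prefix_getD h1 hlen1]
          exact eF_coord (hS := hS) (Hach := Hach) Hher c t'
        have e3 : (e (m :: t')).getD (e t').length 0 = (e (a :: s')).getD (e t').length 0 :=
          prefix_getD h (lt_of_lt_of_le hlen1 h1.length_le)
        have hveq : succv S (e t') m = succv S (e t') c := by
          rw [← eF_coord (hS := hS) (Hach := Hach) Hher m t', e3, e1]
        have hcm : m = c := succv_inj (eF_spec (hS := hS) (Hach := Hach) Hher t').2.1 hveq
        rw [← hcm] at hc
        rcases eq_or_ne (m :: t') (a :: s') with he | hne2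
        · rw [he]
        · exfalso
          have := eF_len_strict_mono (hS := hS) (Hach := Hach) Hher hc hne2
          have := h.length_le
          omega

end eFlemmas

theorem fusion {S : Set (List ℕ)} {P : ℕ → List ℕ → Prop} (hS : Superperfect S)
    (Hach : ∀ (n : ℕ) (σ : List ℕ), σ ∈ S → ∃ τ ∈ S, σ <+: τ ∧ P n τ)
    (Hher : ∀ (n : ℕ) (σ τ : List ℕ), P n σ → σ <+: τ → P n τ) :
    ∃ T : Set (List ℕ), Superperfect T ∧ T ⊆ S ∧
      ∀ x ∈ branches T, ∀ n : ℕ, ∃ j : ℕ, P n (pre x j) := by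
  set e := eF S P hS Hach with he
  set T : Set (List ℕ) := {σ | ∃ t : List ℕ, σ <+: e t} with hT
  have hmemT : ∀ t : List ℕ, e t ∈ T := fun t => ⟨t, List.prefix_refl _⟩
  have hTS : T ⊆ S := by
    rintro σ ⟨t, h⟩
    exact hS.2.1 (e t) (eF_spec (hS := hS) (Hach := Hach) Hher t).1 σ h
  have htree : IsTreeN T := by
    rintro σ ⟨t, h⟩ τ hτ
    exact ⟨t, hτ.trans h⟩
  have hsplit : ∀ σ ∈ T, ∃ τ ∈ T, σ <+: τ ∧ {n : ℕ | τ ++ [n] ∈ T}.Infinite := by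
    rintro σ ⟨t, h⟩
    refine ⟨e t, hmemT t, h, ?_⟩
    apply Set.infinite_of_injective_forall_mem
      (f := fun m : ℕ => succv S (e t) m)
      (succv_inj (eF_spec (hS := hS) (Hach := Hach) Hher t).2.1)
    intro m
    exact ⟨m :: t, eF_cons_prefix (hS := hS) (Hach := Hach) Hher m t⟩
  have key : ∀ x ∈ branches T, ∀ k : ℕ, ∃ t : List ℕ, t.length = k ∧ pre x (e t).length = e t := by
    intro x hx k
    induction k with
    | zero =>
      obtain ⟨t₁, h₁⟩ := hx ((e []).length)
      have h2 : e [] <+: e t₁ := eF_suffix_mono (hS := hS) (Hach := Hach) Hher List.nil_suffix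
      have h3 : pre x (e []).length <+: e [] :=
        List.prefix_of_prefix_length_le h₁ h2 (by simp)
      exact ⟨[], rfl, h3.eq_of_length (by simp)⟩
    | succ k ih =>
      obtain ⟨t, htl, ht⟩ := ih
      set L := (e t).length with hL
      have sub : ∀ n, L < n →
          ∃ c, x L = succv S (e t) c ∧ ∃ t₁, (c :: t) <:+ t₁ ∧ pre x n <+: e t₁ := by
        intro n hn
        obtain ⟨t₁, h₁⟩ := hx n
        have het : e t <+: e t₁ := by
          rw [← ht]
          exact (pre_prefix x hn.le).trans h₁
        have hsuf : t <:+ t₁ :=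
          eF_comp (hS := hS) (Hach := Hach) Hher (t.length + t₁.length) t t₁ le_rfl het
        have hne : t ≠ t₁ := by
          rintro rfl
          have := h₁.length_le
          simp only [pre, List.length_map, List.length_range] at this
          omega
        obtain ⟨c, hc⟩ := cons_of_proper_suffix hsuf hne
        have h1 : e (c :: t) <+: e t₁ := eF_suffix_mono (hS := hS) (Hach := Hach) Hher hc
        have a1 : (e t₁).getD L 0 = succv S (e t) c := by
          rw [prefix_getD h1 (eF_len_lt (hS := hS) (Hach := Hach) Hher c t)]
          exact eF_coord (hS := hS) (Hach := Hach) Hher c t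
        have a2 : (e t₁).getD L 0 = (pre x n).getD L 0 :=
          prefix_getD h₁ (by simpa using hn)
        rw [pre_getD x hn] at a2
        exact ⟨c, by rw [← a2, a1], t₁, hc, h₁⟩
      obtain ⟨c, hxc, t₁, hc, hp⟩ := sub (L + 1) (by omega)
      obtain ⟨c₂, hxc₂, t₂, hc₂, hp₂⟩ := sub ((e (c :: t)).length)
        (eF_len_lt (hS := hS) (Hach := Hach) Hher c t)
      have hcc : c₂ = c := by
        apply succv_inj (eF_spec (hS := hS) (Hach := Hach) Hher t).2.1
        rw [← hxc, ← hxc₂]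
      rw [hcc] at hc₂
      have h1 : e (c :: t) <+: e t₂ := eF_suffix_mono (hS := hS) (Hach := Hach) Hher hc₂
      have h2 : e (c :: t) <+: pre x (e (c :: t)).length :=
        List.prefix_of_prefix_length_le h1 hp₂ (by simp)
      exact ⟨c :: t, by simp [htl], (h2.eq_of_length (by simp)).symm⟩
  refine ⟨T, ⟨⟨[], ⟨[], List.nil_prefix⟩⟩, htree, hsplit⟩, hTS, ?_⟩
  intro x hx n
  obtain ⟨t, htl, ht⟩ := key x hx n
  refine ⟨(e t).length, ?_⟩
  rw [ht]
  exact (eF_spec (hS := hS) (Hach := Hach) Hher t).2.2 n (by omega)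


noncomputable def chainF (S : Set (List ℕ)) (hS : Superperfect S) : ℕ → List ℕ
  | 0 => []
  | (k+1) => splitExt S hS (chainF S hS k) ++ [succv S (splitExt S hS (chainF S hS k)) 0]

lemma chainF_mem {S : Set (List ℕ)} (hS : Superperfect S) : ∀ k, chainF S hS k ∈ S
  | 0 => nil_mem hS
  | (k+1) => by
    obtain ⟨h1, _h2, h3⟩ := splitExt_spec hS (chainF_mem hS k)
    exact succv_mem h3 0

lemma chainF_prefix {S : Set (List ℕ)} (hS : Superperfect S) (k : ℕ) :
    chainF S hS k <+: chainF S hS (k+1) :=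
  ((splitExt_spec hS (chainF_mem hS k)).2.1).trans (List.prefix_append _ _)

lemma chainF_len {S : Set (List ℕ)} (hS : Superperfect S) : ∀ k, k ≤ (chainF S hS k).length
  | 0 => by simp
  | (k+1) => by
    have h1 := chainF_len (hS := hS) k
    have h2 := (splitExt_spec hS (chainF_mem hS k)).2.1.length_le
    show k + 1 ≤ (splitExt S hS (chainF S hS k) ++ _).length
    simp only [List.length_append, List.length_cons, List.length_nil]
    omega

lemma chainF_mono {S : Set (List ℕ)} (hS : Superperfect S) {j k : ℕ} (h : j ≤ k) :
    chainF S hS j <+: chainF S hS k := by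
  induction k with
  | zero => rw [Nat.le_zero.mp h]
  | succ k ih =>
    rcases Nat.lt_or_ge j (k+1) with h' | h'
    · exact (ih (by omega)).trans (chainF_prefix hS k)
    · have : j = k + 1 := by omega
      rw [this]

lemma exists_branch {S : Set (List ℕ)} (hS : Superperfect S) : ∃ x : ℕ → ℕ, x ∈ branches S := by
  set x : ℕ → ℕ := fun i => (chainF S hS (i+1)).getD i 0 with hx
  refine ⟨x, fun n => ?_⟩
  have hpre : pre x n <+: chainF S hS n := by
    rw [List.prefix_iff_eq_take]
    apply List.ext_getElem
    · simp [min_eq_left ((chainF_len hS n).trans_eq' rfl), chainF_len hS n]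
    · intro i hi hi'
      have hin : i < n := by simpa using hi
      have hlen : i < (chainF S hS (i+1)).length := by
        have := chainF_len hS (i+1)
        omega
      have hmono : chainF S hS (i+1) <+: chainF S hS n := chainF_mono hS (by omega)
      have hgd : (chainF S hS n).getD i 0 = (chainF S hS (i+1)).getD i 0 :=
        prefix_getD hmono hlen
      have h1 : (pre x n)[i] = x i := by simp [pre]
      rw [h1, List.getElem_take, ← List.getD_eq_getElem _ 0, hgd]
  exact hS.2.1 _ (chainF_mem hS n) _ hpre

lemma branches_mono {S T : Set (List ℕ)} (h : T ⊆ S) : branches T ⊆ branches S :=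
  fun _x hx n => h (hx n)

/-- σ-boundedness of a set of elements of Baire space -/
def Bdd (A : Set (ℕ → ℕ)) : Prop := ∃ g : ℕ → ℕ → ℕ, ∀ x ∈ A, ∃ k, ∀ i, x i ≤ g k i

lemma Bdd.mono {A B : Set (ℕ → ℕ)} (h : A ⊆ B) (hB : Bdd B) : Bdd A := by
  obtain ⟨g, hg⟩ := hB
  exact ⟨g, fun x hx => hg x (h hx)⟩

lemma bdd_iUnion {ι : Type} [Countable ι] {A : ι → Set (ℕ → ℕ)} (h : ∀ i, Bdd (A i)) :
    Bdd (⋃ i, A i) := by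
  rcases isEmpty_or_nonempty ι with hι | hι
  · exact ⟨fun _ _ => 0, fun x hx => by simp at hx⟩
  · obtain ⟨u, hu⟩ := exists_surjective_nat ι
    choose g hg using h
    refine ⟨fun n => g (u n.unpair.1) n.unpair.2, fun x hx => ?_⟩
    obtain ⟨i, hi⟩ := Set.mem_iUnion.mp hx
    obtain ⟨j, rfl⟩ := hu i
    obtain ⟨k, hk⟩ := hg (u j) x hi
    exact ⟨Nat.pair j k, by simp [Nat.unpair_pair]; exact hk⟩

lemma bdd_union {A B : Set (ℕ → ℕ)} (hA : Bdd A) (hB : Bdd B) : Bdd (A ∪ B) := by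
  obtain ⟨g, hg⟩ := hA
  obtain ⟨g', hg'⟩ := hB
  refine ⟨fun n => if n.unpair.1 = 0 then g n.unpair.2 else g' n.unpair.2, fun x hx => ?_⟩
  rcases hx with hx | hx
  · obtain ⟨k, hk⟩ := hg x hx
    exact ⟨Nat.pair 0 k, by simp [Nat.unpair_pair]; exact hk⟩
  · obtain ⟨k, hk⟩ := hg' x hx
    exact ⟨Nat.pair 1 k, by simp [Nat.unpair_pair]; exact hk⟩

lemma pre_restrict {y : ℕ → ℕ} {σ τ : List ℕ} (h : σ <+: τ) (hy : pre y τ.length = τ) :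
    pre y σ.length = σ := by
  have h1 := h.length_le
  have h2 : (pre y τ.length).take σ.length = τ.take σ.length := by rw [hy]
  rwa [pre_take, min_eq_left h1, ← List.prefix_iff_eq_take.mp h] at h2

lemma pre_agree_mono {x y : ℕ → ℕ} {n m : ℕ} (h : pre x m = pre y m) (hnm : n ≤ m) :
    pre x n = pre y n := by
  have : (pre x m).take n = (pre y m).take n := by rw [h]
  rwa [pre_take, pre_take, min_eq_left hnm] at this

lemma pre_self_getD (σ : List ℕ) : pre (fun i => σ.getD i 0) σ.length = σ := by
  apply List.ext_getElem (by simp)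
  intro i hi hi'
  rw [← List.getD_eq_getElem _ 0 hi']
  simp [pre]


lemma mem_cyl_iff {y : ℕ → ℕ} {σ : List ℕ} :
    pre y σ.length = σ ↔ ∀ i < σ.length, y i = σ.getD i 0 := by
  constructor
  · intro h i hi
    rw [← h, pre_getD y hi]
  · intro h
    apply List.ext_getElem (by simp)
    intro i hi hi'
    have : y i = σ.getD i 0 := h i hi'
    rw [List.getD_eq_getElem _ _ hi'] at this
    simpa [pre] using this

lemma isOpen_cyl (σ : List ℕ) : IsOpen {y : ℕ → ℕ | pre y σ.length = σ} := by
  have : {y : ℕ → ℕ | pre y σ.length = σ}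
      = ⋂ i ∈ Finset.range σ.length, (fun y : ℕ → ℕ => y i) ⁻¹' {σ.getD i 0} := by
    ext y
    simp [mem_cyl_iff]
  rw [this]
  exact isOpen_biInter_finset fun i _ => (continuous_apply i).isOpen_preimage _ (isOpen_discrete _)

lemma measurableSet_cyl (σ : List ℕ) : MeasurableSet {y : ℕ → ℕ | pre y σ.length = σ} := by
  have : {y : ℕ → ℕ | pre y σ.length = σ}
      = ⋂ i ∈ Finset.range σ.length, (fun y : ℕ → ℕ => y i) ⁻¹' {σ.getD i 0} := by
    ext y
    simp [mem_cyl_iff]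
  rw [this]
  exact MeasurableSet.biInter (Set.to_countable _)
    fun i _ => (measurable_pi_apply i) (MeasurableSet.singleton _)

lemma cyl_mem_nhds {U : Set (ℕ → ℕ)} (hU : IsOpen U) {x : ℕ → ℕ} (hx : x ∈ U) :
    ∃ n, ∀ y : ℕ → ℕ, pre y n = pre x n → y ∈ U := by
  obtain ⟨I, u, hI, hsub⟩ := isOpen_pi_iff.mp hU x hx
  set n := if h : I.Nonempty then I.max' h + 1 else 0 with hn
  refine ⟨n, fun y hy => hsub ?_⟩
  intro i hi
  have hin : i < n := by
    have : i ≤ I.max' ⟨i, hi⟩ := Finset.le_max' _ _ hi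
    rw [hn, dif_pos ⟨i, hi⟩]
    omega
  have : y i = x i := by
    have h1 : (pre y n).getD i 0 = (pre x n).getD i 0 := by rw [hy]
    rwa [pre_getD y hin, pre_getD x hin] at h1
  rw [this]
  exact (hI i hi).2

open Topology Filter in
theorem exists_comeager_continuity (f : (ℕ → ℕ) → (ℕ → ℕ)) (hf : Measurable f) :
    ∃ D : Set (ℕ → ℕ),
      (∃ W : ℕ → Set (ℕ → ℕ), (∀ n, IsOpen (W n)) ∧ (∀ n, Dense (W n)) ∧ (⋂ n, W n) ⊆ D) ∧
      ∀ x ∈ D, ∀ l : ℕ, ∃ j, ∀ y ∈ D, pre y j = pre x j → pre (f y) l = pre (f x) l := by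
  have hA : ∀ σ : List ℕ, ∃ V : Set (ℕ → ℕ), IsOpen V ∧
      (f ⁻¹' {y | pre y σ.length = σ}) =ᵇ V :=
    fun σ => (hf (measurableSet_cyl σ)).residualEq_isOpen
  choose V hVopen hVeq using hA
  set E : List ℕ → Set (ℕ → ℕ) :=
    fun σ => {x | x ∈ f ⁻¹' {y | pre y σ.length = σ} ↔ x ∈ V σ} with hE
  have hEres : ∀ σ, E σ ∈ residual (ℕ → ℕ) := by
    intro σ
    have := hVeq σ
    rw [Filter.eventuallyEq_set] at this
    exact this
  set D := ⋂ σ : List ℕ, E σ with hD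
  have hDres : D ∈ residual (ℕ → ℕ) := (countable_iInter_mem.mpr hEres)
  refine ⟨D, ?_, ?_⟩
  · obtain ⟨S, hSo, hSd, hSc, hSsub⟩ := mem_residual_iff.mp hDres
    obtain ⟨w, hw⟩ := (hSc.insert Set.univ).exists_eq_range (Set.insert_nonempty _ _)
    refine ⟨w, ?_, ?_, ?_⟩
    · intro n
      have : w n ∈ insert Set.univ S := by rw [hw]; exact Set.mem_range_self n
      rcases this with h | h
      · rw [h]; exact isOpen_univ
      · exact hSo _ h
    · intro n
      have : w n ∈ insert Set.univ S := by rw [hw]; exact Set.mem_range_self n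
      rcases this with h | h
      · rw [h]; exact dense_univ
      · exact hSd _ h
    · intro x hx
      apply hSsub
      intro t ht
      have : t ∈ insert Set.univ S := Set.mem_insert_of_mem _ ht
      rw [hw] at this
      obtain ⟨n, rfl⟩ := this
      exact Set.mem_iInter.mp hx n
  · intro x hx l
    set σ := pre (f x) l with hσ
    have hσl : σ.length = l := by simp [hσ, pre]
    have hxA : x ∈ f ⁻¹' {y | pre y σ.length = σ} := by
      simp only [Set.mem_preimage, Set.mem_setOf_eq, hσl]
      exact hσ.symm
    have hxE : x ∈ E σ := Set.mem_iInter.mp hx σ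
    have hxV : x ∈ V σ := hxE.mp hxA
    obtain ⟨j, hj⟩ := cyl_mem_nhds (hVopen σ) hxV
    refine ⟨j, fun y hy hagree => ?_⟩
    have hyV : y ∈ V σ := hj y hagree
    have hyE : y ∈ E σ := Set.mem_iInter.mp hy σ
    have : y ∈ f ⁻¹' {y | pre y σ.length = σ} := hyE.mpr hyV
    simp only [Set.mem_preimage, Set.mem_setOf_eq, hσl] at this
    exact this


lemma kernel_dichotomy (E : Set (ℕ → ℕ)) :
    (∃ T : Set (List ℕ), Superperfect T ∧
      ∀ x ∈ branches T, ∀ n : ℕ, ∃ y ∈ E, pre y n = pre x n) ∨ Bdd E := by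
  set Bad : List ℕ → Prop := fun σ => Bdd {x | x ∈ E ∧ pre x σ.length = σ} with hBad
  by_cases hroot : Bad []
  · right
    apply hroot.mono
    intro x hx
    exact ⟨hx, by simp [pre]⟩
  · left
    have bad_mono : ∀ σ τ : List ℕ, σ <+: τ → Bad σ → Bad τ := by
      intro σ τ hστ hb
      apply hb.mono
      rintro x ⟨hxE, hxτ⟩
      exact ⟨hxE, pre_restrict hστ hxτ⟩
    have key : ∀ σ : List ℕ, ¬ Bad σ →
        ∃ τ, σ <+: τ ∧ ¬ Bad τ ∧ {m : ℕ | ¬ Bad (τ ++ [m])}.Infinite := by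
      intro σ hσ
      by_contra hcon
      push_neg at hcon
      have hcon' : ∀ τ, σ <+: τ → ¬ Bad τ → {m : ℕ | ¬ Bad (τ ++ [m])}.Finite := by
        intro τ h1 h2
        exact hcon τ h1 h2
      set Lv : ℕ → Set (List ℕ) :=
        fun j => {τ | σ <+: τ ∧ τ.length = σ.length + j ∧ ¬ Bad τ} with hLvdef
      have hLv : ∀ j, (Lv j).Finite := by
        intro j
        induction j with
        | zero =>
          apply Set.Finite.subset (Set.finite_singleton σ)
          rintro τ ⟨h1, h2, _h3⟩
          exact (h1.eq_of_length (by omega)).symm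
        | succ j ih =>
          apply Set.Finite.subset
            (Set.Finite.biUnion ih
              (fun τ hτ => ((hcon' τ hτ.1 hτ.2.2).image (fun m => τ ++ [m]))))
          rintro τ' ⟨h1, h2, h3⟩
          have hne : τ' ≠ [] := by
            intro hq
            rw [hq] at h2
            simp at h2
          have hdp : τ'.dropLast <+: τ' := List.dropLast_prefix τ'
          have hdl : τ'.dropLast.length = σ.length + j := by
            rw [List.length_dropLast, h2]
            omega
          have hσp : σ <+: τ'.dropLast :=
            List.prefix_of_prefix_length_le h1 hdp (by rw [hdl]; omega)
          have hgood : ¬ Bad τ'.dropLast := fun hb => h3 (bad_mono _ _ hdp hb)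
          apply Set.mem_biUnion (show τ'.dropLast ∈ Lv j from ⟨hσp, hdl, hgood⟩)
          refine ⟨τ'.getLast hne, ?_, List.dropLast_append_getLast hne⟩
          show ¬ Bad (τ'.dropLast ++ [τ'.getLast hne])
          rw [List.dropLast_append_getLast hne]
          exact h3
      have hb : ∀ j : ℕ, ∃ b : ℕ, ∀ τ ∈ Lv (j+1), τ.getD (σ.length + j) 0 ≤ b := by
        intro j
        obtain ⟨b, hb⟩ := ((hLv (j+1)).image (fun τ => τ.getD (σ.length + j) 0)).bddAbove
        exact ⟨b, fun τ hτ => hb (Set.mem_image_of_mem _ hτ)⟩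
      choose b hbspec using hb
      set h : ℕ → ℕ := fun i => if i < σ.length then σ.getD i 0 else b (i - σ.length) with hh
      apply hσ
      have hsub : {x | x ∈ E ∧ pre x σ.length = σ} ⊆
          {x : ℕ → ℕ | ∀ i, x i ≤ h i} ∪
            ⋃ (ρ : {ρ : List ℕ // Bad ρ}), {x | x ∈ E ∧ pre x ρ.1.length = ρ.1} := by
        rintro x ⟨hxE, hxσ⟩
        by_cases hxa : ∀ n : ℕ, ¬ Bad (pre x (σ.length + n))
        · left
          intro i
          rcases Nat.lt_or_ge i σ.length with hi | hi
          · have : x i = σ.getD i 0 := by rw [← hxσ, pre_getD x hi]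
            rw [hh]
            simp only [if_pos hi]
            omega
          · set j := i - σ.length with hj
            have hij : i = σ.length + j := by omega
            have hmem : pre x (σ.length + j + 1) ∈ Lv (j+1) := by
              refine ⟨?_, by simp; omega, ?_⟩
              · rw [← hxσ]
                have := pre_prefix x (show σ.length ≤ σ.length + j + 1 by omega)
                simpa [hxσ] using this
              · have := hxa (j+1)
                rwa [show σ.length + (j+1) = σ.length + j + 1 by omega] at this
            have := hbspec j _ hmem
            rw [pre_getD x (by omega)] at this
            rw [hh]
            simp only [if_neg (by omega : ¬ i < σ.length)]
            rw [show i = σ.length + j by omega, show σ.length + j - σ.length = j by omega]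
            exact this
        · push_neg at hxa
          obtain ⟨n, hn⟩ := hxa
          right
          apply Set.mem_iUnion.mpr
          refine ⟨⟨pre x (σ.length + n), hn⟩, hxE, ?_⟩
          rw [pre_length]
      apply Bdd.mono hsub
      apply bdd_union
      · exact ⟨fun _ => h, fun x hx => ⟨0, hx⟩⟩
      · exact bdd_iUnion (fun ρ => ρ.2)
    refine ⟨{σ | ¬ Bad σ}, ⟨⟨[], hroot⟩, ?_, ?_⟩, ?_⟩
    · rintro σ hσ τ hτ
      exact fun hb => hσ (bad_mono _ _ hτ hb)
    · intro σ hσ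
      obtain ⟨τ, h1, h2, h3⟩ := key σ hσ
      exact ⟨τ, h2, h1, h3⟩
    · intro x hx n
      have hgood : ¬ Bad (pre x n) := hx n
      by_contra hemp
      push_neg at hemp
      apply hgood
      refine ⟨fun _ _ => 0, fun y hy => ?_⟩
      rw [pre_length] at hy
      exact absurd hy.2 (hemp y hy.1)

end SPF

open SPF in
/-- Every Borel measurable function `f : ω^ω → ω^ω` has a superperfect free subset. -/
theorem borel_function_has_superperfect_free_subset
    (f : (ℕ → ℕ) → (ℕ → ℕ)) (hf : Measurable f) :
    ∃ T : Set (List ℕ), Superperfect T ∧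
      ∀ x ∈ branches T, f x = x ∨ f x ∉ branches T := by
  classical
  obtain ⟨D, ⟨W, hWo, hWd, hWsub⟩, hcont⟩ := exists_comeager_continuity f hf
  have hunivSP : Superperfect (Set.univ : Set (List ℕ)) := by
    refine ⟨⟨[], trivial⟩, fun σ _ τ _ => trivial,
      fun σ _ => ⟨σ, trivial, List.prefix_refl σ, ?_⟩⟩
    have h1 : {n : ℕ | σ ++ [n] ∈ (Set.univ : Set (List ℕ))} = Set.univ := by ext; simp
    rw [h1]
    exact Set.infinite_univ
  set PA : ℕ → List ℕ → Prop := fun n τ => ∀ y : ℕ → ℕ, pre y τ.length = τ → y ∈ W n with hPA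
  have hachA : ∀ (n : ℕ) (σ : List ℕ), σ ∈ (Set.univ : Set (List ℕ)) →
      ∃ τ ∈ (Set.univ : Set (List ℕ)), σ <+: τ ∧ PA n τ := by
    intro n σ _
    have hne : {y : ℕ → ℕ | pre y σ.length = σ}.Nonempty :=
      ⟨fun i => σ.getD i 0, pre_self_getD σ⟩
    obtain ⟨z, hz1, hz2⟩ := (hWd n).inter_open_nonempty _ (isOpen_cyl σ) hne
    obtain ⟨j, hj⟩ := cyl_mem_nhds (hWo n) hz2
    refine ⟨pre z (max j σ.length), trivial, ?_, ?_⟩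
    · have h1 : pre z σ.length <+: pre z (max j σ.length) := pre_prefix z (le_max_right _ _)
      rwa [show pre z σ.length = σ from hz1] at h1
    · intro y hy
      rw [pre_length] at hy
      exact hj y (pre_agree_mono hy (le_max_left _ _))
  have hherA : ∀ (n : ℕ) (σ τ : List ℕ), PA n σ → σ <+: τ → PA n τ := by
    intro n σ τ h hστ y hy
    exact h y (pre_restrict hστ hy)
  obtain ⟨S₀, hS₀, _, hS₀W⟩ := fusion hunivSP hachA hherA
  have hS₀D : branches S₀ ⊆ D := by
    intro x hx
    apply hWsub
    apply Set.mem_iInter.mpr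
    intro n
    obtain ⟨j, hP⟩ := hS₀W x hx n
    apply hP x
    rw [pre_length]
  set E : Set (ℕ → ℕ) := {y | y ∈ branches S₀ ∧ f y = y} with hE
  rcases kernel_dichotomy E with ⟨T, hT, happrox⟩ | hbdd
  · refine ⟨T, hT, fun x hx => Or.inl ?_⟩
    have hxS₀ : x ∈ branches S₀ := by
      intro n
      obtain ⟨y, hyE, hyx⟩ := happrox x hx n
      show pre x n ∈ S₀
      rw [← hyx]
      exact hyE.1 n
    have hxD : x ∈ D := hS₀D hxS₀
    funext r
    obtain ⟨j, hj⟩ := hcont x hxD (r+1)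
    obtain ⟨y, hyE, hyx⟩ := happrox x hx (max j (r+1))
    have hyD : y ∈ D := hS₀D hyE.1
    have hagr : pre y j = pre x j := pre_agree_mono hyx (le_max_left _ _)
    have h1 : pre (f y) (r+1) = pre (f x) (r+1) := hj y hyD hagr
    rw [hyE.2] at h1
    have h2 : pre y (r+1) = pre x (r+1) := pre_agree_mono hyx (le_max_right _ _)
    have h3 : pre (f x) (r+1) = pre x (r+1) := by rw [← h1, h2]
    have h5 : (pre (f x) (r+1)).getD r 0 = (pre x (r+1)).getD r 0 := by rw [h3]
    rwa [pre_getD _ (Nat.lt_succ_self r), pre_getD _ (Nat.lt_succ_self r)] at h5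
  · obtain ⟨g, hg⟩ := hbdd
    set PB : ℕ → List ℕ → Prop := fun n τ => ∃ i < τ.length, g n i < τ.getD i 0 with hPB
    have hachB : ∀ (n : ℕ) (σ : List ℕ), σ ∈ S₀ → ∃ τ ∈ S₀, σ <+: τ ∧ PB n τ := by
      intro n σ hσ
      obtain ⟨τ₀, hτ₀S, hστ₀, hinf⟩ := hS₀.2.2 σ hσ
      obtain ⟨v, hv, hgv⟩ := hinf.exists_gt (g n τ₀.length)
      refine ⟨τ₀ ++ [v], hv, hστ₀.trans (List.prefix_append _ _), τ₀.length, by simp, ?_⟩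
      rw [List.getD_append_right _ _ _ _ (le_refl _)]
      simpa using hgv
    have hherB : ∀ (n : ℕ) (σ τ : List ℕ), PB n σ → σ <+: τ → PB n τ := by
      rintro n σ τ ⟨i, hi, hgi⟩ hστ
      exact ⟨i, lt_of_lt_of_le hi hστ.length_le, by rwa [prefix_getD hστ hi]⟩
    obtain ⟨S', hS', hS'S₀, hS'P⟩ := fusion hS₀ hachB hherB
    have hS'b : branches S' ⊆ branches S₀ := branches_mono hS'S₀
    have hescape : ∀ x ∈ branches S', x ∉ E := by
      intro x hx hxE
      obtain ⟨k, hk⟩ := hg x hxE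
      obtain ⟨j, i, hij, hgt⟩ := hS'P x hx k
      rw [pre_getD x (by simpa using hij)] at hgt
      exact absurd (hk i) (by omega)
    obtain ⟨x₀, hx₀⟩ := exists_branch hS'
    have hx₀S₀ : x₀ ∈ branches S₀ := hS'b hx₀
    have hx₀D : x₀ ∈ D := hS₀D hx₀S₀
    have hfx₀ : f x₀ ≠ x₀ := fun h => hescape x₀ hx₀ ⟨hx₀S₀, h⟩
    obtain ⟨m, hm⟩ := Function.ne_iff.mp hfx₀
    obtain ⟨j, hj⟩ := hcont x₀ hx₀D (m+1)
    set j' := max j (m+1) with hj'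
    set p := pre x₀ j' with hp
    set q := pre (f x₀) (m+1) with hq
    have hpS' : p ∈ S' := hx₀ j'
    have hplen : p.length = j' := by rw [hp, pre_length]
    have hqlen : q.length = m + 1 := by rw [hq, pre_length]
    set Tb : Set (List ℕ) := {σ | σ ∈ S' ∧ (σ <+: p ∨ p <+: σ)} with hTb
    have hTbS' : Tb ⊆ S' := fun σ h => h.1
    have htree : IsTreeN Tb := by
      rintro σ ⟨hσS, hσc⟩ τ hτ
      refine ⟨hS'.2.1 σ hσS τ hτ, ?_⟩
      rcases hσc with hc | hc
      · exact Or.inl (hτ.trans hc)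
      · rcases le_total τ.length p.length with hle | hle
        · exact Or.inl (List.prefix_of_prefix_length_le hτ hc hle)
        · exact Or.inr (List.prefix_of_prefix_length_le hc hτ hle)
    have hsplit : ∀ σ ∈ Tb, ∃ τ ∈ Tb, σ <+: τ ∧ {n : ℕ | τ ++ [n] ∈ Tb}.Infinite := by
      rintro σ ⟨hσS, hσc⟩
      obtain ⟨ρ, hρS, hσρ, hpρ⟩ : ∃ ρ, ρ ∈ S' ∧ σ <+: ρ ∧ p <+: ρ := by
        rcases hσc with hc | hc
        · exact ⟨p, hpS', hc, List.prefix_refl p⟩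
        · exact ⟨σ, hσS, List.prefix_refl σ, hc⟩
      obtain ⟨τ, hτS, hρτ, hinf⟩ := hS'.2.2 ρ hρS
      refine ⟨τ, ⟨hτS, Or.inr (hpρ.trans hρτ)⟩, hσρ.trans hρτ, ?_⟩
      apply hinf.mono
      intro v hv
      exact ⟨hv, Or.inr ((hpρ.trans hρτ).trans (List.prefix_append _ _))⟩
    refine ⟨Tb, ⟨⟨p, hpS', Or.inl (List.prefix_refl p)⟩, htree, hsplit⟩, ?_⟩
    intro x hx
    right
    have hxS' : x ∈ branches S' := branches_mono hTbS' hx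
    have hxD : x ∈ D := hS₀D (hS'b hxS')
    have hxp : pre x j' = p := by
      have h1 : pre x j' ∈ Tb := hx j'
      rcases h1.2 with hc | hc
      · exact hc.eq_of_length (by simp [hplen])
      · exact (hc.eq_of_length (by simp [hplen])).symm
    have hagr : pre x j = pre x₀ j := by
      have h1 : pre x j' = pre x₀ j' := by rw [hxp, hp]
      exact pre_agree_mono h1 (le_max_left _ _)
    have hfxq : pre (f x) (m+1) = q := by rw [hq]; exact hj x hxD hagr
    have hqm : q.getD m 0 = f x₀ m := by rw [hq]; exact pre_getD _ (Nat.lt_succ_self m)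
    have hpm : p.getD m 0 = x₀ m := by
      rw [hp]; exact pre_getD _ (lt_of_lt_of_le (Nat.lt_succ_self m) (le_max_right _ _))
    have hqp : q ∉ Tb := by
      rintro ⟨-, hc | hc⟩
      · have h1 := prefix_getD hc (i := m) (by rw [hqlen]; omega)
        rw [hqm, hpm] at h1
        exact hm h1.symm
      · have h1 : p = q := hc.eq_of_length (by
          have := hc.length_le
          rw [hplen, hqlen] at this ⊢
          omega)
        have h2 : p.getD m 0 = q.getD m 0 := by rw [h1]
        rw [hqm, hpm] at h2
        exact hm h2.symm
    intro hfb
    have h1 : pre (f x) (m+1) ∈ Tb := hfb (m+1)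
    rw [hfxq] at h1
    exact hqp h1
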